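/- Let k ≤ n be natural numbers, let G be a k×n matrix over F₂ = ZMod 2 of rank k, let Q be an invertible n×n matrix over F₂ (the generator matrix of a polar code, possibly multi-kernel), and let P be an n×n permutation matrix over F₂. Then there exist an invertible k×k matrix E over F₂ and a k×n matrix M over F₂ in upper-trapezoidal (row-echelon) form such that G = E⁻¹ * M * Q * P; consequently the code {m * G : m ∈ F₂^k} equals {c * P : c ∈ C_p}, where C_p = {m' * M * Q : m' ∈ F₂^k} is a polar code with dynamic frozen bits determined by M. -/

import Mathlib

open Matrix

/-- A permutation matrix. -/
def IsPermMatrix {n : ℕ} (P : Matrix (Fin n) (Fin n) (ZMod 2)) : Prop :=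
  ∃ σ : Equiv.Perm (Fin n), ∀ i j, P i j = if σ i = j then 1 else 0

/-- Upper-trapezoidal (row-echelon) form. -/
def IsUpperTrapezoidal {k n : ℕ} (M : Matrix (Fin k) (Fin n) (ZMod 2)) : Prop :=
  ∃ p : Fin k → Fin n, StrictMono p ∧ (∀ i, M i (p i) = 1) ∧
    ∀ i j, j < p i → M i j = 0

lemma zmod2_add_self : ∀ a : ZMod 2, a + a = 0 := by decide

lemma zmod2_ne_zero : ∀ {a : ZMod 2}, a ≠ 0 → a = 1 := by decide

lemma gauss : ∀ (n k : ℕ) (A : Matrix (Fin k) (Fin n) (ZMod 2)),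
    (∀ c : Fin k → ZMod 2, c ᵥ* A = 0 → c = 0) →
    ∃ (E : Matrix (Fin k) (Fin k) (ZMod 2)) (M : Matrix (Fin k) (Fin n) (ZMod 2)),
      IsUnit E ∧ IsUpperTrapezoidal M ∧ E * A = M := by
  intro n
  induction n with
  | zero =>
    intro k A hA
    have hk : k = 0 := by
      by_contra hk
      have h1 : (fun _ : Fin k => (1 : ZMod 2)) = 0 := by
        apply hA
        funext j; exact j.elim0
      have := congrFun h1 ⟨0, Nat.pos_of_ne_zero hk⟩
      simp at this
    subst hk
    exact ⟨1, A, isUnit_one, ⟨fun i => i.elim0, fun i => i.elim0,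
      fun i => i.elim0, fun i => i.elim0⟩, Matrix.one_mul A⟩
  | succ n ih =>
    intro k A hA
    match k with
    | 0 =>
      exact ⟨1, A, isUnit_one, ⟨fun i => i.elim0, fun i => i.elim0,
        fun i => i.elim0, fun i => i.elim0⟩, Matrix.one_mul A⟩
    | k' + 1 =>
      by_cases hcol : ∀ i, A i 0 = 0
      · -- first column is zero; recurse on remaining columns
        set A' : Matrix (Fin (k' + 1)) (Fin n) (ZMod 2) := of fun i j => A i j.succ with hA'
        have hA'li : ∀ c : Fin (k' + 1) → ZMod 2, c ᵥ* A' = 0 → c = 0 := by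
          intro c hc
          apply hA
          funext j
          refine Fin.cases ?_ (fun j' => ?_) j
          · simp [Matrix.vecMul, dotProduct, hcol]
          · have := congrFun hc j'
            simpa [Matrix.vecMul, dotProduct, hA'] using this
        obtain ⟨E, M', hE, ⟨p', hp'm, hp'1, hp'0⟩, hEM⟩ := ih (k' + 1) A' hA'li
        refine ⟨E, of fun i j => Fin.cases 0 (fun j' => M' i j') j, hE,
          ⟨fun i => (p' i).succ, fun a b hab => Fin.succ_lt_succ_iff.mpr (hp'm hab),
           fun i => by simp [hp'1 i], ?_⟩, ?_⟩
        · intro i j hj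
          refine Fin.cases ?_ (fun j' hj' => ?_) j hj
          · simp
          · simp [hp'0 i j' (Fin.succ_lt_succ_iff.mp hj')]
        · ext i j
          refine Fin.cases ?_ (fun j' => ?_) j
          · simp [Matrix.mul_apply, hcol]
          · have := congrFun (congrFun hEM i) j'
            simpa [Matrix.mul_apply, hA'] using this
      · -- there is a pivot in the first column
        push_neg at hcol
        obtain ⟨i₀, hi₀⟩ := hcol
        have hi₀1 : A i₀ 0 = 1 := zmod2_ne_zero hi₀
        set σ := Equiv.swap (0 : Fin (k' + 1)) i₀ with hσ
        set E₁ : Matrix (Fin (k' + 1)) (Fin (k' + 1)) (ZMod 2) :=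
          of fun r s => if σ r = s then 1 else 0 with hE₁def
        have hE₁mul : ∀ (X : Matrix (Fin (k' + 1)) (Fin (n + 1)) (ZMod 2)) r j,
            (E₁ * X) r j = X (σ r) j := by
          intro X r j
          simp [Matrix.mul_apply, hE₁def, ite_mul, Finset.sum_ite_eq]
        have hE₁sq : E₁ * E₁ = 1 := by
          ext r s
          rw [Matrix.mul_apply, Finset.sum_eq_single (σ r)]
          · simp [hE₁def, Matrix.one_apply, hσ, Equiv.swap_apply_self]
          · intro t _ ht; simp [hE₁def, ht.symm]
          · simp
        set B₁ := E₁ * A with hB₁def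
        have hB₁ : ∀ r j, B₁ r j = A (σ r) j := hE₁mul A
        have hB₁00 : B₁ 0 0 = 1 := by
          rw [hB₁]; simp [hσ, Equiv.swap_apply_left, hi₀1]
        set N₂ : Matrix (Fin (k' + 1)) (Fin (k' + 1)) (ZMod 2) :=
          of fun r s => if s = 0 ∧ r ≠ 0 then B₁ r 0 else 0 with hN₂def
        have hN₂mul : ∀ (X : Matrix (Fin (k' + 1)) (Fin (k' + 1)) (ZMod 2)) r j,
            (N₂ * X) r j = if r = 0 then 0 else B₁ r 0 * X 0 j := by
          intro X r j
          rw [Matrix.mul_apply, Finset.sum_eq_single 0]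
          · by_cases hr : r = 0 <;> simp [hN₂def, hr]
          · intro s _ hs
            simp [hN₂def, hs]
          · simp
        have hN₂mul' : ∀ (X : Matrix (Fin (k' + 1)) (Fin (n + 1)) (ZMod 2)) r j,
            (N₂ * X) r j = if r = 0 then 0 else B₁ r 0 * X 0 j := by
          intro X r j
          rw [Matrix.mul_apply, Finset.sum_eq_single 0]
          · by_cases hr : r = 0 <;> simp [hN₂def, hr]
          · intro s _ hs
            simp [hN₂def, hs]
          · simp
        set E₂ : Matrix (Fin (k' + 1)) (Fin (k' + 1)) (ZMod 2) := 1 + N₂ with hE₂def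
        have hE₂sq : E₂ * E₂ = 1 := by
          have hNN : N₂ * N₂ = 0 := by
            ext r j
            rw [hN₂mul]
            by_cases hr : r = 0 <;> simp [hr, hN₂def]
          have h2 : N₂ + N₂ = 0 := by ext r j; exact zmod2_add_self _
          rw [hE₂def, Matrix.add_mul, Matrix.one_mul, Matrix.mul_add, Matrix.mul_one,
            hNN, add_zero, add_assoc, h2, add_zero]
        set B := E₂ * B₁ with hBdef
        have hBent : ∀ r j, B r j = B₁ r j + if r = 0 then 0 else B₁ r 0 * B₁ 0 j := by
          intro r j
          rw [hBdef, hE₂def, Matrix.add_mul, Matrix.one_mul, Matrix.add_apply, hN₂mul']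
        have hB00 : B 0 0 = 1 := by rw [hBent]; simp [hB₁00]
        have hB0j : ∀ j, B 0 j = B₁ 0 j := by intro j; rw [hBent]; simp
        have hBr0 : ∀ r, r ≠ 0 → B r 0 = 0 := by
          intro r hr
          rw [hBent]
          simp [hr, hB₁00, zmod2_add_self]
        set U := E₂ * E₁ with hUdef
        set V := E₁ * E₂ with hVdef
        have hUV : U * V = 1 := by
          rw [hUdef, hVdef, mul_assoc, ← mul_assoc E₁, hE₁sq, one_mul, hE₂sq]
        have hVU : V * U = 1 := by
          rw [hUdef, hVdef, mul_assoc, ← mul_assoc E₂, hE₂sq, one_mul, hE₁sq]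
        have hUunit : IsUnit U := ⟨⟨U, V, hUV, hVU⟩, rfl⟩
        have hBU : B = U * A := by rw [hBdef, hB₁def, hUdef, Matrix.mul_assoc]
        have hBli : ∀ c : Fin (k' + 1) → ZMod 2, c ᵥ* B = 0 → c = 0 := by
          intro c hc
          have h2 : (c ᵥ* U) ᵥ* A = 0 := by
            rw [Matrix.vecMul_vecMul, ← hBU]; exact hc
          have h3 : c ᵥ* U = 0 := hA _ h2
          have : c = (c ᵥ* U) ᵥ* V := by rw [Matrix.vecMul_vecMul, hUV, Matrix.vecMul_one]
          rw [this, h3, Matrix.zero_vecMul]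
        set B' : Matrix (Fin k') (Fin n) (ZMod 2) := of fun i j => B i.succ j.succ with hB'def
        have hB'li : ∀ c : Fin k' → ZMod 2, c ᵥ* B' = 0 → c = 0 := by
          intro c hc
          have hcons : (Fin.cons 0 c : Fin (k' + 1) → ZMod 2) = 0 := by
            apply hBli
            funext j
            refine Fin.cases ?_ (fun j' => ?_) j
            · simp [Matrix.vecMul, dotProduct, Fin.sum_univ_succ]
              exact Finset.sum_eq_zero fun t _ => by simp [hBr0 t.succ (Fin.succ_ne_zero t)]
            · have := congrFun hc j'
              simpa [Matrix.vecMul, dotProduct, Fin.sum_univ_succ, hB'def] using this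
          funext i
          have := congrFun hcons i.succ
          simpa using this
        obtain ⟨E', M', hE', ⟨p', hp'm, hp'1, hp'0⟩, hEM'⟩ := ih k' B' hB'li
        set F : Matrix (Fin (k' + 1)) (Fin (k' + 1)) (ZMod 2) :=
          of fun i j => Fin.cases (Fin.cases (1 : ZMod 2) (fun _ => 0) j)
            (fun i' => Fin.cases 0 (fun j' => E' i' j') j) i with hFdef
        obtain ⟨E'u, hE'u⟩ := hE'
        set E'i : Matrix (Fin k') (Fin k') (ZMod 2) := ↑(E'u⁻¹) with hE'idef
        have hE'E'i : E' * E'i = 1 := by rw [← hE'u, hE'idef]; exact E'u.mul_inv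
        have hE'iE' : E'i * E' = 1 := by rw [← hE'u, hE'idef]; exact E'u.inv_mul
        set Fi : Matrix (Fin (k' + 1)) (Fin (k' + 1)) (ZMod 2) :=
          of fun i j => Fin.cases (Fin.cases (1 : ZMod 2) (fun _ => 0) j)
            (fun i' => Fin.cases 0 (fun j' => E'i i' j') j) i with hFidef
        have hblock : ∀ (X Y : Matrix (Fin k') (Fin k') (ZMod 2)),
            ((of fun i j => Fin.cases (Fin.cases (1 : ZMod 2) (fun _ => 0) j)
              (fun i' => Fin.cases 0 (fun j' => X i' j') j) i) :
                Matrix (Fin (k' + 1)) (Fin (k' + 1)) (ZMod 2)) *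
            (of fun i j => Fin.cases (Fin.cases (1 : ZMod 2) (fun _ => 0) j)
              (fun i' => Fin.cases 0 (fun j' => Y i' j') j) i) =
            (of fun i j => Fin.cases (Fin.cases (1 : ZMod 2) (fun _ => 0) j)
              (fun i' => Fin.cases 0 (fun j' => (X * Y) i' j') j) i) := by
          intro X Y
          ext r s
          refine Fin.cases ?_ (fun r' => ?_) r <;> refine Fin.cases ?_ (fun s' => ?_) s <;>
            simp [Matrix.mul_apply, Fin.sum_univ_succ]
        have hFFi : F * Fi = 1 := by
          rw [hFdef, hFidef, hblock, hE'E'i]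
          ext r s
          refine Fin.cases ?_ (fun r' => ?_) r <;> refine Fin.cases ?_ (fun s' => ?_) s <;>
            simp [Matrix.one_apply, Fin.succ_ne_zero, (Fin.succ_ne_zero _).symm, eq_comm]
        have hFiF : Fi * F = 1 := by
          rw [hFdef, hFidef, hblock, hE'iE']
          ext r s
          refine Fin.cases ?_ (fun r' => ?_) r <;> refine Fin.cases ?_ (fun s' => ?_) s <;>
            simp [Matrix.one_apply, Fin.succ_ne_zero, (Fin.succ_ne_zero _).symm, eq_comm]
        have hFunit : IsUnit F := ⟨⟨F, Fi, hFFi, hFiF⟩, rfl⟩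
        set M : Matrix (Fin (k' + 1)) (Fin (n + 1)) (ZMod 2) := F * B with hMdef
        have hM0 : ∀ j, M 0 j = B 0 j := by
          intro j
          rw [hMdef, Matrix.mul_apply, Fin.sum_univ_succ]
          simp [hFdef]
        have hMs0 : ∀ i' : Fin k', M i'.succ 0 = 0 := by
          intro i'
          rw [hMdef, Matrix.mul_apply, Fin.sum_univ_succ]
          simp [hFdef]
          exact Finset.sum_eq_zero fun t _ => by simp [hBr0 t.succ (Fin.succ_ne_zero t)]
        have hMss : ∀ (i' : Fin k') (j' : Fin n), M i'.succ j'.succ = M' i' j' := by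
          intro i' j'
          rw [hMdef, Matrix.mul_apply, Fin.sum_univ_succ]
          rw [← hEM']
          simp [hFdef, Matrix.mul_apply, hB'def]
        refine ⟨F * U, M, hFunit.mul hUunit, ?_, by rw [hMdef, hBU, Matrix.mul_assoc]⟩
        refine ⟨fun i => Fin.cases 0 (fun i' => (p' i').succ) i, ?_, ?_, ?_⟩
        · intro a b hab
          refine Fin.cases ?_ (fun a' => ?_) a hab <;> intro hab'
          · refine Fin.cases ?_ (fun b' => ?_) b hab'
            · intro h; exact absurd h (lt_irrefl _)
            · intro _; exact Fin.succ_pos _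
          · refine Fin.cases ?_ (fun b' => ?_) b hab'
            · intro h; exact absurd h (Nat.not_lt_zero _ : ¬ _)
            · intro h
              exact Fin.succ_lt_succ_iff.mpr (hp'm (Fin.succ_lt_succ_iff.mp h))
        · intro i
          refine Fin.cases ?_ (fun i' => ?_) i
          · simpa [hM0] using hB00
          · simpa [hMss] using hp'1 i'
        · intro i j hj
          refine Fin.cases ?_ (fun i' hj => ?_) i hj
          · intro hj; exact absurd hj (by simp)
          · refine Fin.cases ?_ (fun j' hj' => ?_) j hj
            · intro _; exact hMs0 i'
            · rw [hMss]
              exact hp'0 i' j' (Fin.succ_lt_succ_iff.mp hj')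

/-- Any `(n,k)`-binary linear block code can be transformed into a (possibly multi-kernel)
polar code with dynamic frozen bits. -/
theorem blbc_transform_polar {k n : ℕ} (hkn : k ≤ n)
    (G : Matrix (Fin k) (Fin n) (ZMod 2)) (hG : G.rank = k)
    (Q : Matrix (Fin n) (Fin n) (ZMod 2)) (hQ : IsUnit Q)
    (P : Matrix (Fin n) (Fin n) (ZMod 2)) (hP : IsPermMatrix P) :
    ∃ (E : Matrix (Fin k) (Fin k) (ZMod 2)) (M : Matrix (Fin k) (Fin n) (ZMod 2)),
      IsUnit E ∧ IsUpperTrapezoidal M ∧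
      G = E⁻¹ * (M * (Q * P)) ∧
      {c : Fin n → ZMod 2 | ∃ m : Fin k → ZMod 2, c = m ᵥ* G} =
        {c : Fin n → ZMod 2 |
          ∃ cp ∈ {cp : Fin n → ZMod 2 | ∃ m' : Fin k → ZMod 2, cp = m' ᵥ* (M * Q)},
            c = cp ᵥ* P} := by
  -- P is a unit
  obtain ⟨σ, hσ⟩ := hP
  have hPunit : IsUnit P := by
    set P' : Matrix (Fin n) (Fin n) (ZMod 2) := of fun i j => if σ⁻¹ i = j then 1 else 0
      with hP'def
    have h1 : P * P' = 1 := by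
      ext r s
      rw [Matrix.mul_apply, Finset.sum_eq_single (σ r)]
      · simp [hσ, hP'def, Matrix.one_apply, Equiv.eq_symm_apply, eq_comm]
      · intro t _ ht; simp [hσ, ht.symm]
      · simp
    have h2 : P' * P = 1 := by
      ext r s
      rw [Matrix.mul_apply, Finset.sum_eq_single (σ⁻¹ r)]
      · simp [hσ, hP'def, Matrix.one_apply, eq_comm]
      · intro t _ ht; simp only [hP'def, Matrix.of_apply, if_neg (Ne.symm ht), zero_mul]
      · simp
    exact ⟨⟨P, P', h1, h2⟩, rfl⟩
  set N := Q * P with hNdef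
  have hNunit : IsUnit N := hQ.mul hPunit
  have hNdet : IsUnit N.det := (Matrix.isUnit_iff_isUnit_det N).mp hNunit
  set A := G * N⁻¹ with hAdef
  -- rows of G are linearly independent
  have hGli : ∀ c : Fin k → ZMod 2, c ᵥ* G = 0 → c = 0 := by
    have hli : LinearIndependent (ZMod 2) G := by
      have hrow : LinearIndependent (ZMod 2) G.row := by
        rw [linearIndependent_iff_card_eq_finrank_span]
        rw [Set.finrank, ← Matrix.rank_eq_finrank_span_row, hG, Fintype.card_fin]
      exact hrow
    intro c hc
    have := Fintype.linearIndependent_iff.mp hli c ?_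
    · funext i; exact this i
    · have : ∑ i, c i • G i = c ᵥ* G := by
        funext j; simp [Matrix.vecMul, dotProduct, Finset.sum_apply]
      rw [this, hc]
  have hAli : ∀ c : Fin k → ZMod 2, c ᵥ* A = 0 → c = 0 := by
    intro c hc
    apply hGli
    have h2 : (c ᵥ* A) ᵥ* N = 0 := by rw [hc, Matrix.zero_vecMul]
    rw [hAdef, ← Matrix.vecMul_vecMul] at hc
    calc c ᵥ* G = ((c ᵥ* G) ᵥ* N⁻¹) ᵥ* N := by
          rw [Matrix.vecMul_vecMul, Matrix.nonsing_inv_mul N hNdet, Matrix.vecMul_one]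
      _ = 0 := by rw [hc, Matrix.zero_vecMul]
  obtain ⟨E, M, hE, hMtrap, hEM⟩ := gauss n k A hAli
  have hEdet : IsUnit E.det := (Matrix.isUnit_iff_isUnit_det E).mp hE
  have hGeq : G = E⁻¹ * (M * (Q * P)) := by
    have hAeq : A = E⁻¹ * M := by
      rw [← hEM, ← Matrix.mul_assoc, Matrix.nonsing_inv_mul E hEdet, Matrix.one_mul]
    have : G = A * N := by
      rw [hAdef, Matrix.mul_assoc, Matrix.nonsing_inv_mul N hNdet, Matrix.mul_one]
    rw [this, hAeq, ← hNdef, Matrix.mul_assoc]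
  refine ⟨E, M, hE, hMtrap, hGeq, ?_⟩
  ext c
  simp only [Set.mem_setOf_eq]
  constructor
  · rintro ⟨m, rfl⟩
    refine ⟨(m ᵥ* E⁻¹) ᵥ* (M * Q), ⟨m ᵥ* E⁻¹, rfl⟩, ?_⟩
    rw [hGeq]
    simp only [Matrix.vecMul_vecMul, Matrix.mul_assoc]
  · rintro ⟨cp, ⟨m', rfl⟩, rfl⟩
    refine ⟨m' ᵥ* E, ?_⟩
    rw [hGeq]
    simp only [Matrix.vecMul_vecMul, Matrix.mul_assoc]
    rw [← Matrix.mul_assoc E, Matrix.mul_nonsing_inv E hEdet, Matrix.one_mul]
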